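/- A Defender mixed strategy ρ* is a Nash-equilibrium strategy of the zero-sum malware detection game Γ₀ (i.e. there exists μ* with (ρ*,μ*) a mixed Nash equilibrium of Γ₀) if and only if ρ* is a Nash-equilibrium strategy of the non-zero-sum game Γ, if and only if ρ* is a maximin strategy of the Defender, if and only if ρ* is a Strong Stackelberg Equilibrium strategy of the Defender in Γ. Hence the Defender plays optimally by choosing any Nash-equilibrium strategy of Γ₀, regardless of whether the game is zero-sum or non-zero-sum and regardless of whether it is a Nash (simultaneous-move) or Stackelberg (leader–follower) game. -/

import Mathlib

open Finset Set

/-- Expected security damage bilinear form `S(ρ,μ) = Σ_{j,l} ρ j · μ l · S j l`. -/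
def Sbil {R M : ℕ} (S : Fin R → Fin M → ℝ) (ρ : Fin R → ℝ) (μ : Fin M → ℝ) : ℝ :=
  ∑ j, ∑ l, ρ j * μ l * S j l

/-- Expected inspection cost `k(ρ) = Σ_j ρ j · C j`. -/
def kcost {R : ℕ} (C : Fin R → ℝ) (ρ : Fin R → ℝ) : ℝ :=
  ∑ j, ρ j * C j

/-- Defender expected utility `U_d(ρ,μ) = -S(ρ,μ) - k(ρ)` (same in `Γ₀` and `Γ`). -/
def Ud {R M : ℕ} (S : Fin R → Fin M → ℝ) (C : Fin R → ℝ) (ρ : Fin R → ℝ)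
    (μ : Fin M → ℝ) : ℝ :=
  -Sbil S ρ μ - kcost C ρ

/-- Mixed Nash equilibrium of the zero-sum game `Γ₀`, where the Attacker's
utility is `U_a^{Γ₀}(ρ,μ) = -U_d(ρ,μ)`. -/
def NEzero {R M : ℕ} (S : Fin R → Fin M → ℝ) (C : Fin R → ℝ) (ρs : Fin R → ℝ)
    (μs : Fin M → ℝ) : Prop :=
  ρs ∈ stdSimplex ℝ (Fin R) ∧ μs ∈ stdSimplex ℝ (Fin M) ∧
  (∀ ρ ∈ stdSimplex ℝ (Fin R), Ud S C ρs μs ≥ Ud S C ρ μs) ∧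
  (∀ μ ∈ stdSimplex ℝ (Fin M), -Ud S C ρs μs ≥ -Ud S C ρs μ)

/-- Mixed Nash equilibrium of the non-zero-sum game `Γ`, where the Attacker's
utility is `U_a^{Γ}(ρ,μ) = Ξ·S(ρ,μ)`. -/
def NEgame {R M : ℕ} (S : Fin R → Fin M → ℝ) (C : Fin R → ℝ) (Ξ : ℝ)
    (ρs : Fin R → ℝ) (μs : Fin M → ℝ) : Prop :=
  ρs ∈ stdSimplex ℝ (Fin R) ∧ μs ∈ stdSimplex ℝ (Fin M) ∧
  (∀ ρ ∈ stdSimplex ℝ (Fin R), Ud S C ρs μs ≥ Ud S C ρ μs) ∧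
  (∀ μ ∈ stdSimplex ℝ (Fin M), Ξ * Sbil S ρs μs ≥ Ξ * Sbil S ρs μ)

/-- Maximin strategy of the Defender. -/
def Maximin {R M : ℕ} (S : Fin R → Fin M → ℝ) (C : Fin R → ℝ)
    (ρd : Fin R → ℝ) : Prop :=
  ρd ∈ stdSimplex ℝ (Fin R) ∧
  ∀ ρ ∈ stdSimplex ℝ (Fin R),
    sInf ((Ud S C ρd) '' stdSimplex ℝ (Fin M)) ≥
      sInf ((Ud S C ρ) '' stdSimplex ℝ (Fin M))

/-- The Attacker's best-response set to `ρ` in the non-zero-sum game `Γ`. -/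
def BRset {R M : ℕ} (S : Fin R → Fin M → ℝ) (Ξ : ℝ) (ρ : Fin R → ℝ) :
    Set (Fin M → ℝ) :=
  {μ | μ ∈ stdSimplex ℝ (Fin M) ∧
    ∀ μ' ∈ stdSimplex ℝ (Fin M), Ξ * Sbil S ρ μ ≥ Ξ * Sbil S ρ μ'}

/-- Strong Stackelberg Equilibrium strategy of the Defender in `Γ`. -/
def SSEstrat {R M : ℕ} (S : Fin R → Fin M → ℝ) (C : Fin R → ℝ) (Ξ : ℝ)
    (ρs : Fin R → ℝ) : Prop :=
  ρs ∈ stdSimplex ℝ (Fin R) ∧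
  ∀ ρ ∈ stdSimplex ℝ (Fin R),
    sSup ((Ud S C ρs) '' BRset S Ξ ρs) ≥ sSup ((Ud S C ρ) '' BRset S Ξ ρ)


section Aux

variable {R M : ℕ}

/-- The value of the defender against the pure attacker strategy `l`. -/
noncomputable def fval (S : Fin R → Fin M → ℝ) (C : Fin R → ℝ) (ρ : Fin R → ℝ)
    (l : Fin M) : ℝ :=
  -(∑ j, ρ j * S j l) - kcost C ρ

lemma ind_mem_stdSimplex {N : ℕ} (l : Fin N) :
    (fun l' => if l' = l then (1:ℝ) else 0) ∈ stdSimplex ℝ (Fin N) := by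
  constructor
  · intro x; dsimp only; split <;> norm_num
  · simp

lemma Sbil_ind (S : Fin R → Fin M → ℝ) (ρ : Fin R → ℝ) (l : Fin M) :
    Sbil S ρ (fun l' => if l' = l then (1:ℝ) else 0) = ∑ j, ρ j * S j l := by
  unfold Sbil
  refine Finset.sum_congr rfl fun j _ => ?_
  rw [Finset.sum_eq_single l]
  · simp
  · intro b _ hb; simp [hb]
  · intro h; exact absurd (Finset.mem_univ l) h

lemma Ud_ind (S : Fin R → Fin M → ℝ) (C : Fin R → ℝ) (ρ : Fin R → ℝ) (l : Fin M) :
    Ud S C ρ (fun l' => if l' = l then (1:ℝ) else 0) = fval S C ρ l := by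
  unfold Ud fval
  rw [Sbil_ind]

lemma fval_eq (S : Fin R → Fin M → ℝ) (C : Fin R → ℝ) (ρ : Fin R → ℝ) (l : Fin M) :
    fval S C ρ l = ∑ j, ρ j * (-(S j l) - C j) := by
  unfold fval kcost
  rw [← Finset.sum_neg_distrib, ← Finset.sum_sub_distrib]
  exact Finset.sum_congr rfl fun j _ => by ring

lemma Ud_affine (S : Fin R → Fin M → ℝ) (C : Fin R → ℝ) (ρ : Fin R → ℝ)
    {μ : Fin M → ℝ} (hμ : μ ∈ stdSimplex ℝ (Fin M)) :
    Ud S C ρ μ = ∑ l, μ l * fval S C ρ l := by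
  symm
  have h1 : ∑ l, μ l = 1 := hμ.2
  have key : ∀ l, μ l * fval S C ρ l
      = -(∑ j, ρ j * μ l * S j l) - μ l * kcost C ρ := by
    intro l
    unfold fval
    rw [mul_sub, mul_neg, Finset.mul_sum]
    congr 2
    exact Finset.sum_congr rfl fun j _ => by ring
  calc ∑ l, μ l * fval S C ρ l
      = ∑ l, (-(∑ j, ρ j * μ l * S j l) - μ l * kcost C ρ) :=
        Finset.sum_congr rfl fun l _ => key l
    _ = (∑ l, -(∑ j, ρ j * μ l * S j l)) - ∑ l, μ l * kcost C ρ :=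
        Finset.sum_sub_distrib _ _
    _ = -(∑ l, ∑ j, ρ j * μ l * S j l) - (∑ l, μ l) * kcost C ρ := by
        rw [Finset.sum_neg_distrib, Finset.sum_mul]
    _ = Ud S C ρ μ := by
        rw [h1, one_mul, Finset.sum_comm]
        rfl

/-- The minimum of `Ud S C ρ` over the attacker simplex is attained at a vertex. -/
lemma isLeast_Ud (hM : 0 < M) (S : Fin R → Fin M → ℝ) (C : Fin R → ℝ)
    (ρ : Fin R → ℝ) :
    ∃ l0 : Fin M, IsLeast (Ud S C ρ '' stdSimplex ℝ (Fin M)) (fval S C ρ l0) := by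
  haveI : Nonempty (Fin M) := ⟨⟨0, hM⟩⟩
  obtain ⟨l0, _, hl0⟩ := Finset.exists_mem_eq_inf' Finset.univ_nonempty (fval S C ρ)
  have hmin : ∀ l, fval S C ρ l0 ≤ fval S C ρ l := by
    intro l; rw [← hl0]; exact Finset.inf'_le _ (Finset.mem_univ l)
  refine ⟨l0, ⟨⟨_, ind_mem_stdSimplex l0, Ud_ind S C ρ l0⟩, ?_⟩⟩
  rintro y ⟨μ, hμ, rfl⟩
  rw [Ud_affine S C ρ hμ]
  calc fval S C ρ l0 = (∑ l, μ l) * fval S C ρ l0 := by rw [hμ.2, one_mul]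
    _ = ∑ l, μ l * fval S C ρ l0 := Finset.sum_mul _ _ _
    _ ≤ ∑ l, μ l * fval S C ρ l :=
        Finset.sum_le_sum fun l _ => mul_le_mul_of_nonneg_left (hmin l) (hμ.1 l)

/-- The minimax / separation lemma. -/
lemma minimax_aux (hR : 0 < R) (hM : 0 < M)
    (A : Fin R → Fin M → ℝ) (v : ℝ)
    (hmax : ∀ ρ ∈ stdSimplex ℝ (Fin R), ∃ l, ∑ j, ρ j * A j l ≤ v) :
    ∃ μ ∈ stdSimplex ℝ (Fin M), ∀ j, ∑ l, μ l * A j l ≤ v := by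
  by_contra hcon
  push_neg at hcon
  set φ : (Fin M → ℝ) → (Fin R → ℝ) := fun μ j => ∑ l, μ l * A j l with hφdef
  set D : Set (Fin R → ℝ) := φ '' stdSimplex ℝ (Fin M) with hD
  set E : Set (Fin R → ℝ) := {y | ∀ j, y j ≤ v} with hE
  have hφlin : IsLinearMap ℝ φ := by
    constructor
    · intro a b; funext j
      simp only [hφdef, Pi.add_apply, add_mul, Finset.sum_add_distrib]
    · intro c a; funext j
      simp only [hφdef, Pi.smul_apply, smul_eq_mul, Finset.mul_sum]
      exact Finset.sum_congr rfl fun l _ => by ring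
  have hφcont : Continuous φ :=
    continuous_pi fun j => continuous_finset_sum _ fun l _ =>
      (continuous_apply l).mul continuous_const
  have hDconv : Convex ℝ D := (convex_stdSimplex ℝ _).is_linear_image hφlin
  have hDcomp : IsCompact D := (isCompact_stdSimplex ℝ _).image hφcont
  have hEinter : E = ⋂ j, {y : Fin R → ℝ | y j ≤ v} := by
    ext y; simp [hE]
  have hEconv : Convex ℝ E := by
    rw [hEinter]
    exact convex_iInter fun j =>
      convex_halfSpace_le ⟨fun a b => rfl, fun c a => rfl⟩ v
  have hEclosed : IsClosed E := by
    rw [hEinter]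
    exact isClosed_iInter fun j => isClosed_le (continuous_apply j) continuous_const
  have hdisj : Disjoint D E := by
    rw [Set.disjoint_left]
    rintro y ⟨μ, hμ, rfl⟩ hyE
    obtain ⟨j, hj⟩ := hcon μ hμ
    exact absurd (hyE j) (not_le.2 hj)
  obtain ⟨f, u, w, hfu, huw, hfw⟩ :=
    geometric_hahn_banach_compact_closed hDconv hDcomp hEconv hEclosed hdisj
  set c : Fin R → ℝ := fun j => f (fun j' => if j = j' then 1 else 0) with hcdef
  have hf : ∀ y : Fin R → ℝ, f y = ∑ j, y j * c j := by
    intro y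
    conv_lhs => rw [pi_eq_sum_univ y]
    rw [map_sum]
    exact Finset.sum_congr rfl fun j _ => by rw [map_smul, smul_eq_mul]
  have hcvE : (fun _ : Fin R => v) ∈ E := fun j => le_refl v
  have hfcv : w < f (fun _ => v) := hfw _ hcvE
  have hcle : ∀ j, c j ≤ 0 := by
    intro j
    by_contra hpos
    push_neg at hpos
    set t : ℝ := (f (fun _ => v) - w) / c j with ht
    have htpos : 0 < t := div_pos (by linarith) hpos
    set e : Fin R → ℝ := fun j' => v - t * (if j = j' then 1 else 0) with he
    have heE : e ∈ E := by
      intro j'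
      simp only [he]
      split
      · nlinarith
      · simp
    have hfe : f e = w := by
      have he2 : e = (fun _ => v) - t • (fun j' => if j = j' then (1:ℝ) else 0) := by
        funext j'
        simp only [he, Pi.sub_apply, Pi.smul_apply, smul_eq_mul]
      rw [he2, map_sub, map_smul, smul_eq_mul]
      have hcj : f (fun j' => if j = j' then (1:ℝ) else 0) = c j := rfl
      rw [hcj, ht]
      field_simp
      ring
    have := hfw e heE
    rw [hfe] at this
    exact lt_irrefl w this
  haveI : Nonempty (Fin M) := ⟨⟨0, hM⟩⟩
  have hdD : φ (fun l' => if l' = (⟨0, hM⟩ : Fin M) then (1:ℝ) else 0) ∈ D :=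
    ⟨_, ind_mem_stdSimplex _, rfl⟩
  have hdlt : f (φ (fun l' => if l' = (⟨0, hM⟩ : Fin M) then (1:ℝ) else 0)) < u :=
    hfu _ hdD
  have hcne : ∃ j0, c j0 < 0 := by
    by_contra hno
    push_neg at hno
    have hzero : ∀ j, c j = 0 := fun j => le_antisymm (hcle j) (hno j)
    have h1 : f (fun _ : Fin R => v) = 0 := by rw [hf]; simp [hzero]
    have h2 : f (φ (fun l' => if l' = (⟨0, hM⟩ : Fin M) then (1:ℝ) else 0)) = 0 := by
      rw [hf]; simp [hzero]
    rw [h1] at hfcv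
    rw [h2] at hdlt
    linarith
  obtain ⟨j0, hj0⟩ := hcne
  set T : ℝ := ∑ j, -c j with hT
  have hTpos : 0 < T :=
    Finset.sum_pos' (fun j _ => by linarith [hcle j])
      ⟨j0, Finset.mem_univ _, by linarith⟩
  set ρ : Fin R → ℝ := fun j => -c j / T with hρ
  have hρΔ : ρ ∈ stdSimplex ℝ (Fin R) := by
    constructor
    · intro j; exact div_nonneg (by linarith [hcle j]) hTpos.le
    · show ∑ j, -c j / T = 1
      rw [← Finset.sum_div, ← hT]
      exact div_self hTpos.ne'
  have hsumc : ∑ j, c j = -T := by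
    rw [hT, Finset.sum_neg_distrib, neg_neg]
  have hkey : ∀ l, v < ∑ j, ρ j * A j l := by
    intro l
    have hmem : φ (fun l' => if l' = l then (1:ℝ) else 0) ∈ D :=
      ⟨_, ind_mem_stdSimplex l, rfl⟩
    have hflt : f (φ (fun l' => if l' = l then (1:ℝ) else 0)) < u := hfu _ hmem
    have hφval : φ (fun l' => if l' = l then (1:ℝ) else 0) = fun j => A j l := by
      funext j
      simp only [hφdef]
      rw [Finset.sum_eq_single l]
      · simp
      · intro b _ hb; simp [hb]
      · intro h; exact absurd (Finset.mem_univ l) h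
    rw [hφval, hf] at hflt
    have hfcv2 : f (fun _ : Fin R => v) = v * (-T) := by
      rw [hf, ← Finset.mul_sum, hsumc]
    have hX : ∑ j, A j l * c j < -(v * T) := by
      rw [hfcv2] at hfcv; linarith
    have hs : ∑ j, ρ j * A j l = (∑ j, -(A j l * c j)) / T := by
      rw [Finset.sum_div]
      exact Finset.sum_congr rfl fun j _ => by rw [hρ]; ring
    rw [hs, lt_div_iff₀ hTpos, Finset.sum_neg_distrib]
    linarith
  obtain ⟨l, hl⟩ := hmax ρ hρΔ
  exact absurd hl (not_le.2 (hkey l))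

/-- `Ud ρ` is constant on the best-response set and its sup equals the inf over
the simplex. -/
lemma sSup_BR_eq (hM : 0 < M) (S : Fin R → Fin M → ℝ) (C : Fin R → ℝ)
    {Ξ : ℝ} (hΞ : 0 < Ξ) (ρ : Fin R → ℝ) :
    sSup (Ud S C ρ '' BRset S Ξ ρ) = sInf (Ud S C ρ '' stdSimplex ℝ (Fin M)) := by
  obtain ⟨l0, hL⟩ := isLeast_Ud hM S C ρ
  rw [hL.csInf_eq]
  have himg : Ud S C ρ '' BRset S Ξ ρ = {fval S C ρ l0} := by
    ext y
    simp only [Set.mem_image, Set.mem_singleton_iff]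
    constructor
    · rintro ⟨μ, ⟨hμΔ, hbr⟩, rfl⟩
      have h1 : Sbil S ρ (fun l' => if l' = l0 then (1:ℝ) else 0) ≤ Sbil S ρ μ :=
        (mul_le_mul_iff_right₀ hΞ).mp (hbr _ (ind_mem_stdSimplex l0))
      have h2 : fval S C ρ l0 ≤ Ud S C ρ μ := hL.2 ⟨μ, hμΔ, rfl⟩
      have h3 : Ud S C ρ μ ≤ fval S C ρ l0 := by
        rw [← Ud_ind S C ρ l0]
        unfold Ud
        linarith
      linarith
    · rintro rfl
      refine ⟨_, ⟨ind_mem_stdSimplex l0, fun μ' hμ' => ?_⟩, Ud_ind S C ρ l0⟩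
      rw [ge_iff_le, mul_le_mul_iff_right₀ hΞ]
      have h2 : fval S C ρ l0 ≤ Ud S C ρ μ' := hL.2 ⟨μ', hμ', rfl⟩
      rw [← Ud_ind S C ρ l0] at h2
      unfold Ud at h2
      linarith
  rw [himg, csSup_singleton]

end Aux

/-- a Defender strategy is a Nash-equilibrium strategy of the
zero-sum game `Γ₀` iff it is a Nash-equilibrium strategy of the non-zero-sum
game `Γ`, iff it is a maximin strategy, iff it is a Strong Stackelberg
Equilibrium strategy of `Γ`. -/
theorem stmt7 {R M : ℕ} (hR : 0 < R) (hM : 0 < M)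
    (S : Fin R → Fin M → ℝ) (hS : ∀ j l, 0 ≤ S j l)
    (C : Fin R → ℝ) (hC : ∀ j, 0 ≤ C j)
    (Ξ : ℝ) (hΞ : 0 < Ξ)
    (ρs : Fin R → ℝ) :
    ((∃ μs, NEzero S C ρs μs) ↔ (∃ μs, NEgame S C Ξ ρs μs)) ∧
    ((∃ μs, NEgame S C Ξ ρs μs) ↔ Maximin S C ρs) ∧
    (Maximin S C ρs ↔ SSEstrat S C Ξ ρs) := by
  haveI : Nonempty (Fin M) := ⟨⟨0, hM⟩⟩
  -- equivalence of the two NE notions, μs by μs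
  have hNE : ∀ μs, NEzero S C ρs μs ↔ NEgame S C Ξ ρs μs := by
    intro μs
    unfold NEzero NEgame
    refine and_congr_right fun _ => and_congr_right fun _ => and_congr_right fun _ => ?_
    constructor
    · intro h μ hμ
      have h' := h μ hμ
      rw [ge_iff_le, mul_le_mul_iff_right₀ hΞ]
      unfold Ud at h'
      linarith
    · intro h μ hμ
      have h' := h μ hμ
      rw [ge_iff_le, mul_le_mul_iff_right₀ hΞ] at h'
      unfold Ud
      linarith
  -- NE strategies of Γ are exactly maximin strategies
  have key1 : (∃ μs, NEgame S C Ξ ρs μs) ↔ Maximin S C ρs := by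
    constructor
    · rintro ⟨μs, hρΔ, hμΔ, hdef, hatt⟩
      refine ⟨hρΔ, fun ρ hρ => ?_⟩
      have hatt' : ∀ μ ∈ stdSimplex ℝ (Fin M), Ud S C ρs μs ≤ Ud S C ρs μ := by
        intro μ hμ
        have h' := hatt μ hμ
        rw [ge_iff_le, mul_le_mul_iff_right₀ hΞ] at h'
        unfold Ud
        linarith
      have hInfs : sInf (Ud S C ρs '' stdSimplex ℝ (Fin M)) = Ud S C ρs μs := by
        refine IsLeast.csInf_eq ⟨⟨μs, hμΔ, rfl⟩, ?_⟩
        rintro y ⟨μ, hμ, rfl⟩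
        exact hatt' μ hμ
      obtain ⟨l0, hL⟩ := isLeast_Ud hM S C ρ
      rw [hInfs, hL.csInf_eq, ge_iff_le]
      calc fval S C ρ l0 ≤ Ud S C ρ μs := hL.2 ⟨μs, hμΔ, rfl⟩
        _ ≤ Ud S C ρs μs := hdef ρ hρ
    · rintro ⟨hρΔ, hmm⟩
      obtain ⟨l0s, hLs⟩ := isLeast_Ud hM S C ρs
      set v : ℝ := fval S C ρs l0s with hv
      have hmax : ∀ ρ ∈ stdSimplex ℝ (Fin R), ∃ l, ∑ j, ρ j * (-(S j l) - C j) ≤ v := by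
        intro ρ hρ
        obtain ⟨l1, hL1⟩ := isLeast_Ud hM S C ρ
        have h := hmm ρ hρ
        rw [hLs.csInf_eq, hL1.csInf_eq, ge_iff_le] at h
        exact ⟨l1, by rw [← fval_eq]; exact h⟩
      obtain ⟨μs, hμΔ, hbd⟩ := minimax_aux hR hM (fun j l => -(S j l) - C j) v hmax
      have hUd_le : ∀ ρ' ∈ stdSimplex ℝ (Fin R), Ud S C ρ' μs ≤ v := by
        intro ρ' hρ'
        rw [Ud_affine S C ρ' hμΔ]
        have heq : ∑ l, μs l * fval S C ρ' l
            = ∑ j, ρ' j * (∑ l, μs l * (-(S j l) - C j)) := by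
          simp only [fval_eq, Finset.mul_sum]
          rw [Finset.sum_comm]
          exact Finset.sum_congr rfl fun j _ =>
            Finset.sum_congr rfl fun l _ => by ring
        rw [heq]
        calc ∑ j, ρ' j * (∑ l, μs l * (-(S j l) - C j)) ≤ ∑ j, ρ' j * v :=
              Finset.sum_le_sum fun j _ =>
                mul_le_mul_of_nonneg_left (hbd j) (hρ'.1 j)
          _ = v := by rw [← Finset.sum_mul, hρ'.2, one_mul]
      have hge : v ≤ Ud S C ρs μs := hLs.2 ⟨μs, hμΔ, rfl⟩
      have heqv : Ud S C ρs μs = v := le_antisymm (hUd_le ρs hρΔ) hge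
      refine ⟨μs, hρΔ, hμΔ, fun ρ hρ => ?_, fun μ hμ => ?_⟩
      · rw [ge_iff_le, heqv]
        exact hUd_le ρ hρ
      · rw [ge_iff_le, mul_le_mul_iff_right₀ hΞ]
        have h1 : v ≤ Ud S C ρs μ := hLs.2 ⟨μ, hμ, rfl⟩
        rw [← heqv] at h1
        unfold Ud at h1
        linarith
  -- maximin strategies are exactly SSE strategies
  have key2 : Maximin S C ρs ↔ SSEstrat S C Ξ ρs := by
    unfold Maximin SSEstrat
    refine and_congr_right fun _ => forall_congr' fun ρ => imp_congr_right fun _ => ?_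
    rw [sSup_BR_eq hM S C hΞ ρ, sSup_BR_eq hM S C hΞ ρs]
  exact ⟨exists_congr hNE, key1, key2⟩
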